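/- Let x be a unit vector, x* a unit eigenvector of the symmetric tensor T of order m with eigenvalue λ*, α = x^T x*, u* = α x* − x, and β* = α^{m−2} λ* − μ(x). Then the first-order (in u*) term vanishes: T(x*, ..., x*, u*) = 0, and |β*| ≤ |λ*|·‖u*‖² + Σ_{j=2}^m C(m,j) |T(x*,...,x*, u*,...,u*)| where u* appears j times; in particular there exists a constant C depending only on T and m such that |β*| ≤ C ‖u*‖² whenever ‖u*‖ ≤ 1. -/

import Mathlib

open scoped RealInnerProductSpace
open Finset Matrix

noncomputable section

/-- Euclidean space `ℝ^n`. -/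
abbrev Evec (n : ℕ) := EuclideanSpace ℝ (Fin n)

/-- Interpret a plain function as a vector in `ℝ^n` (with the Euclidean norm). -/
def toE {n : ℕ} (v : Fin n → ℝ) : Evec n := (WithLp.equiv 2 (Fin n → ℝ)).symm v

/-- An order-`m` tensor on `ℝ^n`, viewed as an `m`-multilinear form. -/
abbrev SymTensor (n m : ℕ) := MultilinearMap ℝ (fun _ : Fin m => Evec n) ℝ

/-- The tensor is symmetric: invariant under permutations of its `m` slots. -/
def IsSymT {n m : ℕ} (T : SymTensor n m) : Prop :=
  ∀ (σ : Equiv.Perm (Fin m)) (v : Fin m → Evec n), (T fun i => v (σ i)) = T v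

/-- `μ(x) = T(x,…,x)`. -/
def tmu {n m : ℕ} (T : SymTensor n m) (x : Evec n) : ℝ := T fun _ => x

/-- `T(I,x,…,x)`: the vector whose `i`-th entry is `T(eᵢ,x,…,x)`. -/
def tvec {n m : ℕ} (T : SymTensor n m) (x : Evec n) : Evec n :=
  toE fun i => T fun k => if (k : ℕ) = 0 then EuclideanSpace.single i 1 else x

/-- `T(I,I,x,…,x)`: the matrix whose `(i,j)` entry is `T(eᵢ,eⱼ,x,…,x)`. -/
def tmat {n m : ℕ} (T : SymTensor n m) (x : Evec n) : Matrix (Fin n) (Fin n) ℝ :=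
  Matrix.of fun i j => T fun k =>
    if (k : ℕ) = 0 then EuclideanSpace.single i 1
    else if (k : ℕ) = 1 then EuclideanSpace.single j 1 else x

/-- The gradient `g(x) = T(I,x,…,x) − μ(x) x`. -/
def gvec {n m : ℕ} (T : SymTensor n m) (x : Evec n) : Evec n := tvec T x - tmu T x • x

/-- The Hessian `H = (m−1) T(I,I,x,…,x) − λ I` (with the eigenvalue `λ` given). -/
def HmatL {n m : ℕ} (T : SymTensor n m) (x : Evec n) (lam : ℝ) :
    Matrix (Fin n) (Fin n) ℝ :=
  ((m : ℝ) - 1) • tmat T x - lam • (1 : Matrix (Fin n) (Fin n) ℝ)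

/-- `(x,λ)` is a (real, unit-norm) eigenpair of `T`: `T(I,x,…,x) = λ x`, `‖x‖ = 1`. -/
def IsEigenpair {n m : ℕ} (T : SymTensor n m) (x : Evec n) (lam : ℝ) : Prop :=
  tvec T x = lam • x ∧ ‖x‖ = 1

/-- with `x` a unit vector, `(x*, λ*)` a unit eigenpair of `T`,
`α = xᵀ x*`, `u* = α x* − x` and `β* = α^{m−2} λ* − μ(x)`: the first-order term
vanishes, `T(x*,…,x*,u*) = 0`; moreover
`|β*| ≤ |λ*| ‖u*‖² + Σ_{j=2}^m C(m,j) |T(x*,…,x*,u*,…,u*)|` (with `u*` in `j`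
slots), and there is a constant `C` depending only on `T` and `m` such that
`|β*| ≤ C ‖u*‖²` whenever `‖u*‖ ≤ 1`. -/
-- auxiliary lemmas
lemma aux_decomp {n : ℕ} (y : Evec n) : y = ∑ i, y i • EuclideanSpace.single i 1 := by
  ext j
  rw [WithLp.ofLp_sum, Finset.sum_apply]
  simp [EuclideanSpace.single_apply]

lemma aux_card_filter_lt (m c : ℕ) (h : c ≤ m) :
    #(univ.filter (fun k : Fin m => (k:ℕ) < c)) = c := by
  have key : #(univ.filter (fun k : Fin m => (k:ℕ) < c)) = #(range c) := by
    apply Finset.card_bij' (fun (k : Fin m) _ => (k:ℕ))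
      (fun a ha => (⟨a, lt_of_lt_of_le (Finset.mem_range.1 ha) h⟩ : Fin m)) <;>
    · intro a ha
      simp only [Finset.mem_range, Finset.mem_filter, Finset.mem_univ, true_and] at ha ⊢ <;>
        try simp_all
  rw [key, Finset.card_range]

lemma aux_exists_perm {m : ℕ} {s t : Finset (Fin m)} (h : #s = #t) :
    ∃ σ : Equiv.Perm (Fin m), ∀ i, i ∈ s ↔ σ i ∈ t := by
  classical
  have hc : #(sᶜ) = #(tᶜ) := by simp [Finset.card_compl, h]
  let e1 : {i // i ∈ s} ≃ {i // i ∈ t} := Finset.equivOfCardEq h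
  let e2 : {i // ¬ i ∈ s} ≃ {i // ¬ i ∈ t} :=
    ((Equiv.subtypeEquivRight (fun i => (Finset.mem_compl (s := s)).symm)).trans
      (Finset.equivOfCardEq hc)).trans
      (Equiv.subtypeEquivRight (fun i => (Finset.mem_compl (s := t))))
  refine ⟨Equiv.subtypeCongr e1 e2, fun i => ?_⟩
  constructor
  · intro hi
    rw [Equiv.subtypeCongr, Equiv.trans_apply, Equiv.sumCompl_symm_apply_of_pos hi]
    exact (e1 ⟨i, hi⟩).2
  · intro hi
    by_contra hs
    rw [Equiv.subtypeCongr, Equiv.trans_apply, Equiv.sumCompl_symm_apply_of_neg hs] at hi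
    simp at hi
    exact (e2 ⟨i, hs⟩).2 hi

/-- the "tail" index set -/
def tset (m j : ℕ) : Finset (Fin m) := univ.filter (fun k => ¬ ((k:ℕ) < m - j))

lemma card_tset (m j : ℕ) (hj : j ≤ m) : #(tset m j) = j := by
  classical
  have h1 := Finset.card_filter_add_card_filter_not
    (s := (univ : Finset (Fin m))) (p := fun k : Fin m => (k:ℕ) < m - j)
  have h2 := aux_card_filter_lt m (m - j) (Nat.sub_le m j)
  simp only [Finset.card_univ, Fintype.card_fin] at h1
  unfold tset
  omega

lemma mem_tset {m j : ℕ} (k : Fin m) : k ∈ tset m j ↔ ¬ ((k:ℕ) < m - j) := by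
  simp [tset]

lemma T_indSet_eq_tail {n m : ℕ} (T : SymTensor n m) (hT : IsSymT T)
    (xs u : Evec n) (s : Finset (Fin m)) :
    T (fun i => if i ∈ s then u else xs)
      = T (fun k => if (k:ℕ) < m - #s then xs else u) := by
  classical
  have hsm : #s ≤ m := by
    simpa using Finset.card_le_card (Finset.subset_univ s)
  obtain ⟨σ, hσ⟩ := aux_exists_perm (s := s) (t := tset m #s) (by rw [card_tset m _ hsm])
  have := hT σ (fun k => if (k:ℕ) < m - #s then xs else u)
  rw [← this]
  congr 1
  funext i
  by_cases hi : i ∈ s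
  · have : σ i ∈ tset m #s := (hσ i).1 hi
    rw [mem_tset] at this
    simp [hi, this]
  · have : ¬ σ i ∈ tset m #s := fun h => hi ((hσ i).2 h)
    rw [mem_tset, not_not] at this
    simp [hi, this]

lemma expand_T {n m : ℕ} (T : SymTensor n m) (hT : IsSymT T) (xs u : Evec n) (a : ℝ) :
    (T fun _ => a • xs - u)
      = ∑ j ∈ range (m + 1), (m.choose j : ℝ) *
          ((-1)^j * a^(m - j) * T (fun k => if (k:ℕ) < m - j then xs else u)) := by
  classical
  have h0 : (fun _ : Fin m => a • xs - u)
      = (fun _ : Fin m => -u) + (fun _ : Fin m => a • xs) := by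
    funext i; simp [sub_eq_neg_add]
  rw [h0, T.map_add_univ]
  have hterm : ∀ s : Finset (Fin m),
      T (s.piecewise (fun _ => -u) (fun _ => a • xs))
        = (-1)^(#s) * a^(m - #s) * T (fun k => if (k:ℕ) < m - #s then xs else u) := by
    intro s
    have h1 : s.piecewise (fun _ => -u) (fun _ => a • xs)
        = fun i => (if i ∈ s then (-1:ℝ) else a) • (if i ∈ s then u else xs) := by
      funext i
      by_cases hi : i ∈ s <;> simp [Finset.piecewise, hi]
    rw [h1, T.map_smul_univ]
    have h2 : (∏ i, (if i ∈ s then (-1:ℝ) else a)) = (-1)^(#s) * a^(m - #s) := by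
      rw [← Finset.prod_mul_prod_compl s]
      rw [Finset.prod_congr rfl (fun i hi => if_pos hi),
        Finset.prod_congr rfl (fun i hi => if_neg (Finset.mem_compl.1 hi)),
        Finset.prod_const, Finset.prod_const, Finset.card_compl, Fintype.card_fin]
    rw [h2, T_indSet_eq_tail T hT xs u s, smul_eq_mul]
  calc ∑ s : Finset (Fin m), T (s.piecewise (fun _ => -u) (fun _ => a • xs))
      = ∑ s ∈ (univ : Finset (Fin m)).powerset,
          (-1)^(#s) * a^(m - #s) * T (fun k => if (k:ℕ) < m - #s then xs else u) := by
        rw [Finset.powerset_univ]; exact Finset.sum_congr rfl (fun s _ => hterm s)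
    _ = ∑ j ∈ range (#(univ : Finset (Fin m)) + 1), ∑ s ∈ Finset.powersetCard j univ,
          (-1)^(#s) * a^(m - #s) * T (fun k => if (k:ℕ) < m - #s then xs else u) :=
        Finset.sum_powerset _ _
    _ = ∑ j ∈ range (m + 1), (m.choose j : ℝ) *
          ((-1)^j * a^(m - j) * T (fun k => if (k:ℕ) < m - j then xs else u)) := by
        rw [Finset.card_univ, Fintype.card_fin]
        refine Finset.sum_congr rfl (fun j hj => ?_)
        rw [Finset.sum_congr rfl (fun s hs => ?_), Finset.sum_const,
          Finset.card_powersetCard, Finset.card_univ, Fintype.card_fin, nsmul_eq_mul, mul_assoc]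
        · rw [(Finset.mem_powersetCard.1 hs).2]; ring

/-- the linear map `v ↦ T(v, xs, …, xs)` (v in slot 0) -/
def Lslot {n m : ℕ} (T : SymTensor n m) (xs : Evec n) (hm : 2 ≤ m) : Evec n →ₗ[ℝ] ℝ :=
  T.toLinearMap (fun _ => xs) ⟨0, by omega⟩

lemma Lslot_eq_inner {n m : ℕ} (T : SymTensor n m) (xs : Evec n) (hm : 2 ≤ m) (v : Evec n) :
    Lslot T xs hm v = ⟪tvec T xs, v⟫ := by
  classical
  have hL : ∀ w : Evec n, Lslot T xs hm w
      = T (fun k => if (k:ℕ) = 0 then w else xs) := by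
    intro w
    show T (Function.update (fun _ => xs) ⟨0, by omega⟩ w) = _
    congr 1
    funext k
    rcases eq_or_ne k ⟨0, by omega⟩ with h | h
    · subst h; simp
    · rw [Function.update_of_ne h]
      have : ¬ ((k:ℕ) = 0) := by
        intro h0; exact h (Fin.ext h0)
      simp [this]
  have htv : ∀ i, tvec T xs i = Lslot T xs hm (EuclideanSpace.single i 1) := by
    intro i; rw [hL]; rfl
  conv_lhs => rw [aux_decomp v]
  rw [map_sum]
  rw [PiLp.inner_apply]
  refine Finset.sum_congr rfl (fun i _ => ?_)
  rw [LinearMap.map_smul, htv i, smul_eq_mul]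
  simp [RCLike.inner_apply, mul_comm]

lemma tmu_xs_eq {n m : ℕ} (T : SymTensor n m) (xs : Evec n) (hm : 2 ≤ m) {lam : ℝ}
    (heig : tvec T xs = lam • xs) (hxs : ‖xs‖ = 1) :
    tmu T xs = lam := by
  have h1 : tmu T xs = Lslot T xs hm xs := by
    show T _ = T (Function.update (fun _ => xs) ⟨0, by omega⟩ xs)
    congr 1
    funext k
    rcases eq_or_ne k ⟨0, by omega⟩ with h | h
    · subst h; simp
    · rw [Function.update_of_ne h]
  rw [h1, Lslot_eq_inner, heig, real_inner_smul_left, real_inner_self_eq_norm_sq, hxs]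
  norm_num

lemma first_order_zero {n m : ℕ} (T : SymTensor n m) (xs : Evec n) (hm : 2 ≤ m)
    (hT : IsSymT T) {lam : ℝ} (heig : tvec T xs = lam • xs)
    (u : Evec n) (hu : ⟪xs, u⟫ = 0) :
    (T fun k => if (k:ℕ) < m - 1 then xs else u) = 0 := by
  classical
  have hs : #({(⟨0, by omega⟩ : Fin m)} : Finset (Fin m)) = 1 := by simp
  have h1 := T_indSet_eq_tail T hT xs u {(⟨0, by omega⟩ : Fin m)}
  rw [hs] at h1
  rw [← h1]
  have h2 : (fun i => if i ∈ ({(⟨0, by omega⟩ : Fin m)} : Finset (Fin m)) then u else xs)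
      = Function.update (fun _ => xs) (⟨0, by omega⟩ : Fin m) u := by
    funext k
    rcases eq_or_ne k ⟨0, by omega⟩ with h | h
    · subst h; simp
    · rw [Function.update_of_ne h]; simp [h]
  rw [h2]
  have : T (Function.update (fun _ => xs) (⟨0, by omega⟩ : Fin m) u) = Lslot T xs hm u := rfl
  rw [this, Lslot_eq_inner, heig, real_inner_smul_left, hu, mul_zero]

lemma tail_zero {n m : ℕ} (T : SymTensor n m) (xs u : Evec n) :
    (T fun k => if (k:ℕ) < m - 0 then xs else u) = tmu T xs := by
  congr 1
  funext k
  simp [k.isLt]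

lemma aux_coord_le {n : ℕ} (w : Evec n) (i : Fin n) : |w i| ≤ ‖w‖ := by
  have h1 : w i = ⟪EuclideanSpace.single i (1:ℝ), w⟫ := by
    rw [PiLp.inner_apply]
    simp [EuclideanSpace.single_apply, RCLike.inner_apply]
  rw [h1]
  calc |⟪EuclideanSpace.single i (1:ℝ), w⟫| ≤ ‖EuclideanSpace.single i (1:ℝ)‖ * ‖w‖ :=
        abs_real_inner_le_norm _ _
    _ = ‖w‖ := by rw [EuclideanSpace.norm_single]; simp

lemma bound_T {n m : ℕ} (T : SymTensor n m) :
    ∃ B : ℝ, 0 ≤ B ∧ ∀ v : Fin m → Evec n, |T v| ≤ B * ∏ k, ‖v k‖ := by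
  classical
  refine ⟨∑ r : Fin m → Fin n, |T fun k => EuclideanSpace.single (r k) 1|,
    Finset.sum_nonneg (fun _ _ => abs_nonneg _), fun v => ?_⟩
  have h1 : T v = ∑ r : Fin m → Fin n,
      (∏ k, v k (r k)) * T (fun k => EuclideanSpace.single (r k) 1) := by
    conv_lhs => rw [show v = fun k => ∑ i, v k i • EuclideanSpace.single i 1 from
      funext (fun k => aux_decomp (v k))]
    rw [T.map_sum]
    refine Finset.sum_congr rfl fun r _ => ?_
    rw [show (fun k => v k (r k) • EuclideanSpace.single (r k) (1:ℝ))
        = fun k => v k (r k) • ((fun k => EuclideanSpace.single (r k) (1:ℝ)) k) from rfl,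
      T.map_smul_univ, smul_eq_mul]
  rw [h1]
  calc |∑ r : Fin m → Fin n, (∏ k, v k (r k)) * T (fun k => EuclideanSpace.single (r k) 1)|
      ≤ ∑ r : Fin m → Fin n, |(∏ k, v k (r k)) * T (fun k => EuclideanSpace.single (r k) 1)| :=
        Finset.abs_sum_le_sum_abs _ _
    _ ≤ ∑ r : Fin m → Fin n, (∏ k, ‖v k‖) * |T (fun k => EuclideanSpace.single (r k) 1)| := by
        refine Finset.sum_le_sum (fun r _ => ?_)
        rw [abs_mul]
        refine mul_le_mul_of_nonneg_right ?_ (abs_nonneg _)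
        rw [abs_prod]
        exact Finset.prod_le_prod (fun k _ => abs_nonneg _) (fun k _ => aux_coord_le _ _)
    _ = (∑ r : Fin m → Fin n, |T fun k => EuclideanSpace.single (r k) 1|) * ∏ k, ‖v k‖ := by
        rw [Finset.sum_mul]
        refine Finset.sum_congr rfl (fun r _ => mul_comm _ _)

theorem stmt_19' {n m : ℕ} (hm : 2 ≤ m) (T : SymTensor n m) (hT : IsSymT T)
    (lam : ℝ) (xs : Evec n) (heig : tvec T xs = lam • xs ∧ ‖xs‖ = 1) :
    (∀ x : Evec n, ‖x‖ = 1 →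
      (T fun k => if (k : ℕ) < m - 1 then xs else ⟪x, xs⟫ • xs - x) = 0 ∧
      |⟪x, xs⟫ ^ (m - 2) * lam - tmu T x| ≤
        |lam| * ‖⟪x, xs⟫ • xs - x‖ ^ 2 +
          ∑ j ∈ Finset.Icc 2 m, (m.choose j : ℝ) *
            |T fun k => if (k : ℕ) < m - j then xs else ⟪x, xs⟫ • xs - x|) ∧
    ∃ C : ℝ, ∀ x : Evec n, ‖x‖ = 1 → ‖⟪x, xs⟫ • xs - x‖ ≤ 1 →
      |⟪x, xs⟫ ^ (m - 2) * lam - tmu T x| ≤ C * ‖⟪x, xs⟫ • xs - x‖ ^ 2 := by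
  classical
  obtain ⟨heigv, hxs⟩ := heig
  have key : ∀ x : Evec n, ‖x‖ = 1 →
      (T fun k => if (k : ℕ) < m - 1 then xs else ⟪x, xs⟫ • xs - x) = 0 ∧
      |⟪x, xs⟫ ^ (m - 2) * lam - tmu T x| ≤
        |lam| * ‖⟪x, xs⟫ • xs - x‖ ^ 2 +
          ∑ j ∈ Finset.Icc 2 m, (m.choose j : ℝ) *
            |T fun k => if (k : ℕ) < m - j then xs else ⟪x, xs⟫ • xs - x| := by
    intro x hx
    set u : Evec n := ⟪x, xs⟫ • xs - x with hu_def
    have hu_perp : ⟪xs, u⟫ = 0 := by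
      rw [hu_def, inner_sub_right, real_inner_smul_right, real_inner_self_eq_norm_sq, hxs,
        real_inner_comm]
      ring
    have first : (T fun k => if (k:ℕ) < m - 1 then xs else u) = 0 :=
      first_order_zero T xs hm hT heigv u hu_perp
    refine ⟨first, ?_⟩
    -- Pythagoras
    have hα2 : ⟪x, xs⟫ ^ 2 + ‖u‖ ^ 2 = 1 := by
      have h1 : ‖u‖ ^ 2 = ‖⟪x, xs⟫ • xs‖ ^ 2 - 2 * ⟪⟪x, xs⟫ • xs, x⟫ + ‖x‖ ^ 2 := by
        rw [hu_def]; exact norm_sub_sq_real _ _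
      rw [norm_smul, real_inner_smul_left, hxs, hx] at h1
      have hcomm : ⟪xs, x⟫ = ⟪x, xs⟫ := real_inner_comm _ _
      rw [hcomm, Real.norm_eq_abs, mul_one, sq_abs] at h1
      nlinarith
    have habs : |⟪x, xs⟫| ≤ 1 := by
      rw [← abs_one]
      apply abs_le_abs <;> nlinarith [sq_nonneg ‖u‖, sq_nonneg (⟪x, xs⟫ - 1), sq_nonneg (⟪x, xs⟫ + 1)]
    -- expansion
    have hxu : (fun _ : Fin m => x) = fun _ : Fin m => ⟪x, xs⟫ • xs - u := by
      funext k; rw [hu_def, sub_sub_cancel]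
    have hexp : tmu T x = ∑ j ∈ range (m + 1), (m.choose j : ℝ) *
        ((-1)^j * ⟪x, xs⟫^(m - j) * T (fun k => if (k:ℕ) < m - j then xs else u)) := by
      rw [tmu, hxu]
      exact expand_T T hT xs u ⟪x, xs⟫
    have hsplit : range (m + 1) = insert 0 (insert 1 (Finset.Icc 2 m)) := by
      ext a
      simp only [Finset.mem_range, Finset.mem_insert, Finset.mem_Icc]
      omega
    have h0ni : (0 : ℕ) ∉ insert 1 (Finset.Icc 2 m) := by simp
    have h1ni : (1 : ℕ) ∉ Finset.Icc 2 m := by simp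
    rw [hsplit, Finset.sum_insert h0ni, Finset.sum_insert h1ni] at hexp
    have hf0 : (m.choose 0 : ℝ) *
        ((-1)^0 * ⟪x, xs⟫^(m - 0) * T (fun k => if (k:ℕ) < m - 0 then xs else u))
        = ⟪x, xs⟫^m * lam := by
      rw [tail_zero T xs u, tmu_xs_eq T xs hm heigv hxs]
      simp
    have hf1 : (m.choose 1 : ℝ) *
        ((-1)^1 * ⟪x, xs⟫^(m - 1) * T (fun k => if (k:ℕ) < m - 1 then xs else u)) = 0 := by
      rw [first]; ring
    rw [hf0, hf1, zero_add] at hexp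
    set S : ℝ := ∑ j ∈ Finset.Icc 2 m, (m.choose j : ℝ) *
        ((-1)^j * ⟪x, xs⟫^(m - j) * T (fun k => if (k:ℕ) < m - j then xs else u)) with hS
    have hpow : ⟪x, xs⟫^m = ⟪x, xs⟫^(m-2) * ⟪x, xs⟫^2 := by
      rw [← pow_add]; congr 1; omega
    have e1 : ⟪x, xs⟫^(m-2) * lam - tmu T x
        = lam * (⟪x, xs⟫^(m-2) * ‖u‖^2) - S := by
      rw [hexp, hpow]
      linear_combination (-(lam * ⟪x, xs⟫^(m-2))) * hα2
    rw [e1]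
    have hp1 : |⟪x, xs⟫|^(m-2) ≤ 1 := pow_le_one₀ (abs_nonneg _) habs
    calc |lam * (⟪x, xs⟫^(m-2) * ‖u‖^2) - S|
        ≤ |lam * (⟪x, xs⟫^(m-2) * ‖u‖^2)| + |S| := abs_sub _ _
      _ ≤ |lam| * ‖u‖^2 + ∑ j ∈ Finset.Icc 2 m, (m.choose j : ℝ) *
            |T fun k => if (k:ℕ) < m - j then xs else u| := by
          refine add_le_add ?_ ?_
          · rw [abs_mul, abs_mul, abs_pow, abs_of_nonneg (pow_nonneg (norm_nonneg u) 2)]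
            exact mul_le_mul_of_nonneg_left
              (mul_le_of_le_one_left (pow_nonneg (norm_nonneg u) 2) hp1) (abs_nonneg lam)
          · refine le_trans (Finset.abs_sum_le_sum_abs _ _) (Finset.sum_le_sum fun j hj => ?_)
            have h1 : |(-1:ℝ)^j * ⟪x, xs⟫^(m-j)| ≤ 1 := by
              rw [abs_mul, abs_pow, abs_pow, abs_neg, abs_one, one_pow, one_mul]
              exact pow_le_one₀ (abs_nonneg _) habs
            rw [abs_mul, abs_mul, Nat.abs_cast]
            refine mul_le_mul_of_nonneg_left ?_ (Nat.cast_nonneg _)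
            exact mul_le_of_le_one_left (abs_nonneg _) h1
  refine ⟨key, ?_⟩
  obtain ⟨B, hB0, hB⟩ := bound_T T
  refine ⟨|lam| + (∑ j ∈ Finset.Icc 2 m, (m.choose j : ℝ)) * B, fun x hx hu1 => ?_⟩
  set u : Evec n := ⟪x, xs⟫ • xs - x with hu_def
  have main := (key x hx).2
  have hterm : ∀ j ∈ Finset.Icc 2 m,
      |T fun k => if (k:ℕ) < m - j then xs else u| ≤ B * ‖u‖^2 := by
    intro j hj
    obtain ⟨hj2, hjm⟩ := Finset.mem_Icc.1 hj
    have hprod : (∏ k : Fin m, ‖if (k:ℕ) < m - j then xs else u‖) = ‖u‖^j := by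
      have heach : ∀ k : Fin m, ‖if (k:ℕ) < m - j then xs else u‖
          = if (k:ℕ) < m - j then (1:ℝ) else ‖u‖ := by
        intro k; rw [apply_ite norm, hxs]
      rw [Finset.prod_congr rfl (fun k _ => heach k),
        ← Finset.prod_filter_mul_prod_filter_not univ (fun k : Fin m => (k:ℕ) < m - j)]
      rw [Finset.prod_congr rfl (fun k hk => if_pos (Finset.mem_filter.1 hk).2),
        Finset.prod_congr rfl (fun k hk => if_neg (Finset.mem_filter.1 hk).2),
        Finset.prod_const, Finset.prod_const, one_pow, one_mul]
      congr 1
      exact card_tset m j hjm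
    calc |T fun k => if (k:ℕ) < m - j then xs else u|
        ≤ B * ∏ k : Fin m, ‖if (k:ℕ) < m - j then xs else u‖ := hB _
      _ = B * ‖u‖^j := by rw [hprod]
      _ ≤ B * ‖u‖^2 := by
          refine mul_le_mul_of_nonneg_left ?_ hB0
          exact pow_le_pow_of_le_one (norm_nonneg _) hu1 hj2
  have hsum : ∑ j ∈ Finset.Icc 2 m, (m.choose j : ℝ) *
      |T fun k => if (k:ℕ) < m - j then xs else u|
      ≤ (∑ j ∈ Finset.Icc 2 m, (m.choose j : ℝ)) * (B * ‖u‖^2) := by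
    rw [Finset.sum_mul]
    refine Finset.sum_le_sum fun j hj => ?_
    exact mul_le_mul_of_nonneg_left (hterm j hj) (Nat.cast_nonneg _)
  calc |⟪x, xs⟫ ^ (m - 2) * lam - tmu T x|
      ≤ |lam| * ‖u‖ ^ 2 + ∑ j ∈ Finset.Icc 2 m, (m.choose j : ℝ) *
          |T fun k => if (k:ℕ) < m - j then xs else u| := main
    _ ≤ |lam| * ‖u‖ ^ 2 + (∑ j ∈ Finset.Icc 2 m, (m.choose j : ℝ)) * (B * ‖u‖^2) :=
        add_le_add_right hsum _
    _ = (|lam| + (∑ j ∈ Finset.Icc 2 m, (m.choose j : ℝ)) * B) * ‖u‖ ^ 2 := by ring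

theorem stmt_19 {n m : ℕ} (hm : 2 ≤ m) (T : SymTensor n m) (hT : IsSymT T)
    (lam : ℝ) (xs : Evec n) (heig : IsEigenpair T xs lam) :
    (∀ x : Evec n, ‖x‖ = 1 →
      (T fun k => if (k : ℕ) < m - 1 then xs else ⟪x, xs⟫ • xs - x) = 0 ∧
      |⟪x, xs⟫ ^ (m - 2) * lam - tmu T x| ≤
        |lam| * ‖⟪x, xs⟫ • xs - x‖ ^ 2 +
          ∑ j ∈ Finset.Icc 2 m, (m.choose j : ℝ) *
            |T fun k => if (k : ℕ) < m - j then xs else ⟪x, xs⟫ • xs - x|) ∧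
    ∃ C : ℝ, ∀ x : Evec n, ‖x‖ = 1 → ‖⟪x, xs⟫ • xs - x‖ ≤ 1 →
      |⟪x, xs⟫ ^ (m - 2) * lam - tmu T x| ≤ C * ‖⟪x, xs⟫ • xs - x‖ ^ 2 := by
  exact stmt_19' hm T hT lam xs heig
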